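/- Let X* have the Skellam distribution Sk(λ₁, λ₂). Then for any nonnegative integer x, the CDF relation P(X* ≤ x) = 1 - P(Q ≤ 2λ₁) holds for x > 0, where Q follows a noncentral chi-squared distribution with 2(x+1) degrees of freedom and noncentrality parameter 2λ₂; and for x ≤ 0, P(X* ≤ x) = P(Q' ≤ 2λ₂) where Q' is noncentral chi-squared with -2x degrees of freedom and noncentrality parameter 2λ₁. -/

import Mathlib

open Real Filter

/-- PMF of the Poisson distribution with mean `l`. -/
noncomputable def poissonPMF (l : ℝ) (n : ℕ) : ℝ :=
  Real.exp (-l) * l ^ n / n.factorial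

/-- PMF of the Skellam distribution `Sk(l1, l2)`, i.e. the distribution of the
difference `X₁ - X₂` of independent Poisson variables with means `l1`, `l2`,
obtained by the convolution formula. -/
noncomputable def skellamPMF (l1 l2 : ℝ) (x : ℤ) : ℝ :=
  ∑' k : ℕ, (if 0 ≤ x + (k : ℤ) then poissonPMF l1 (x + (k : ℤ)).toNat else 0) * poissonPMF l2 k

/-- Modified Bessel function of the first kind of integer order `n`,
`I_n(z) = (z/2)^|n| ∑_{k} (z/2)^{2k}/(k! (k+|n|)!)`, with `I_{-n} = I_n`. -/
noncomputable def besselI (n : ℤ) (z : ℝ) : ℝ :=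
  (z / 2) ^ n.natAbs *
    ∑' k : ℕ, (z / 2) ^ (2 * k) / ((k.factorial : ℝ) * (k + n.natAbs).factorial)

/-- Upper tail probability `P(X* ≥ a)` of the Skellam distribution. -/
noncomputable def skellamTail (l1 l2 : ℝ) (a : ℤ) : ℝ :=
  ∑' x : ℤ, if a ≤ x then skellamPMF l1 l2 x else 0

/-- Lower CDF `P(X* ≤ x)` of the Skellam distribution. -/
noncomputable def skellamCDF (l1 l2 : ℝ) (x : ℤ) : ℝ :=
  ∑' y : ℤ, if y ≤ x then skellamPMF l1 l2 y else 0

/-- Upper tail probability `P(Poisson(l) ≥ m)`. -/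
noncomputable def poissonTail (l : ℝ) (m : ℕ) : ℝ :=
  ∑' j : ℕ, if m ≤ j then poissonPMF l j else 0

/-- CDF of the noncentral chi-squared distribution with an even number `2 * m`
of degrees of freedom and noncentrality parameter `τ`, evaluated at `t`:
a Poisson(τ/2) mixture of central chi-squared CDFs, where the central
chi-squared CDF with `2 * (m + k)` degrees of freedom at `t` equals the
Poisson tail `P(Poisson(t/2) ≥ m + k)`. -/
noncomputable def ncChiSqCDFEven (m : ℕ) (τ t : ℝ) : ℝ :=
  ∑' k : ℕ, poissonPMF (τ / 2) k * poissonTail (t / 2) (m + k)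

lemma poissonPMF_nonneg {l : ℝ} (hl : 0 ≤ l) (n : ℕ) : 0 ≤ poissonPMF l n := by
  unfold poissonPMF; positivity

lemma summable_poissonPMF (l : ℝ) : Summable (poissonPMF l) := by
  unfold poissonPMF
  simp_rw [mul_div_assoc]
  exact (Real.summable_pow_div_factorial l).mul_left _

lemma tsum_poissonPMF (l : ℝ) : ∑' n, poissonPMF l n = 1 := by
  unfold poissonPMF
  simp_rw [mul_div_assoc]
  rw [tsum_mul_left]
  have h : ∑' n : ℕ, l ^ n / (n.factorial : ℝ) = Real.exp l := by
    rw [Real.exp_eq_exp_ℝ]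
    exact (NormedSpace.expSeries_div_hasSum_exp l).tsum_eq
  rw [h, Real.exp_neg, inv_mul_cancel₀ (Real.exp_ne_zero l)]

section Master

variable {l1 l2 : ℝ}

lemma summable_prodPMF (l1 l2 : ℝ) :
    Summable (fun p : ℕ × ℕ => poissonPMF l1 p.1 * poissonPMF l2 p.2) := by
  have := (summable_poissonPMF l1).abs.mul_of_nonneg (summable_poissonPMF l2).abs
    (fun n => abs_nonneg _) (fun n => abs_nonneg _)
  apply Summable.of_abs
  apply this.of_nonneg_of_le (fun p => abs_nonneg _)
  intro p
  rw [abs_mul]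

lemma summable_F (h1 : 0 ≤ l1) (h2 : 0 ≤ l2) (c : ℤ → Prop) [DecidablePred c] :
    Summable (fun p : ℕ × ℕ =>
      if c ((p.1 : ℤ) - p.2) then poissonPMF l1 p.1 * poissonPMF l2 p.2 else 0) := by
  apply Summable.of_nonneg_of_le (g := fun p : ℕ × ℕ =>
      if c ((p.1 : ℤ) - p.2) then poissonPMF l1 p.1 * poissonPMF l2 p.2 else 0)
    (f := fun p : ℕ × ℕ => poissonPMF l1 p.1 * poissonPMF l2 p.2)
  · intro p
    split_ifs
    · exact mul_nonneg (poissonPMF_nonneg h1 _) (poissonPMF_nonneg h2 _)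
    · exact le_rfl
  · intro p
    split_ifs
    · exact le_rfl
    · exact mul_nonneg (poissonPMF_nonneg h1 _) (poissonPMF_nonneg h2 _)
  · exact summable_prodPMF l1 l2

lemma master (h1 : 0 ≤ l1) (h2 : 0 ≤ l2) (c : ℤ → Prop) [DecidablePred c] :
    ∑' y : ℤ, (if c y then skellamPMF l1 l2 y else 0)
      = ∑' p : ℕ × ℕ,
          (if c ((p.1 : ℤ) - p.2) then poissonPMF l1 p.1 * poissonPMF l2 p.2 else 0) := by
  classical
  set F : ℕ × ℕ → ℝ := fun p =>
    if c ((p.1 : ℤ) - p.2) then poissonPMF l1 p.1 * poissonPMF l2 p.2 else 0 with hF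
  set G : ℤ × ℕ → ℝ := fun q =>
    if c q.1 ∧ 0 ≤ q.1 + (q.2 : ℤ) then
      poissonPMF l1 (q.1 + (q.2 : ℤ)).toNat * poissonPMF l2 q.2 else 0 with hG
  have hi : Function.Injective (fun p : ℕ × ℕ => (((p.1 : ℤ) - p.2, p.2) : ℤ × ℕ)) := by
    intro p q h
    simp only [Prod.mk.injEq] at h
    obtain ⟨h1', h2'⟩ := h
    ext
    · omega
    · exact h2'
  have hGi : (G ∘ fun p : ℕ × ℕ => (((p.1 : ℤ) - p.2, p.2) : ℤ × ℕ)) = F := by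
    funext p
    simp only [Function.comp, hG, hF]
    have h0 : (0 : ℤ) ≤ (p.1 : ℤ) - p.2 + p.2 := by omega
    have ht : ((p.1 : ℤ) - p.2 + p.2).toNat = p.1 := by omega
    rw [ht]
    simp [h0]
  have hsupp : ∀ q : ℤ × ℕ, q ∉ Set.range
      (fun p : ℕ × ℕ => (((p.1 : ℤ) - p.2, p.2) : ℤ × ℕ)) → G q = 0 := by
    intro q hq
    by_contra hne
    apply hq
    have hpos : 0 ≤ q.1 + (q.2 : ℤ) := by
      by_contra hneg
      apply hne
      simp only [hG]
      rw [if_neg]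
      tauto
    refine ⟨((q.1 + (q.2 : ℤ)).toNat, q.2), ?_⟩
    have : (((q.1 + (q.2 : ℤ)).toNat : ℤ)) = q.1 + q.2 := Int.toNat_of_nonneg hpos
    ext <;> simp [this]
  have hsupp' : Function.support G ⊆ Set.range
      (fun p : ℕ × ℕ => (((p.1 : ℤ) - p.2, p.2) : ℤ × ℕ)) := by
    intro q hq
    by_contra h
    exact hq (hsupp q h)
  have hFs : Summable F := summable_F h1 h2 c
  have hGs : Summable G := (hi.summable_iff hsupp).mp (by rw [hGi]; exact hFs)
  have step1 : ∑' y : ℤ, (if c y then skellamPMF l1 l2 y else 0)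
      = ∑' y : ℤ, ∑' k : ℕ, G (y, k) := by
    apply tsum_congr
    intro y
    by_cases hc : c y
    · simp only [hc, if_true]
      unfold skellamPMF
      apply tsum_congr
      intro k
      simp only [hG, hc, true_and]
      split_ifs with h
      · rfl
      · rw [zero_mul]
    · simp only [hc, if_false, hG, false_and, if_false, tsum_zero]
  rw [step1, ← Summable.tsum_prod' hGs (fun y => hGs.prod_factor y)]
  rw [← hGi]
  exact (hi.tsum_eq hsupp').symm

end Master

theorem skellam_cdf_noncentral_chisq (l1 l2 : ℝ) (h1 : 0 < l1) (h2 : 0 < l2) (x : ℤ) :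
    (0 < x →
      skellamCDF l1 l2 x = 1 - ncChiSqCDFEven (x + 1).toNat (2 * l2) (2 * l1)) ∧
    (x ≤ 0 →
      skellamCDF l1 l2 x = ncChiSqCDFEven (-x).toNat (2 * l1) (2 * l2)) := by
  classical
  have h1' := h1.le
  have h2' := h2.le
  have hmaster := fun (c : ℤ → Prop) (_ : DecidablePred c) => @master l1 l2 h1' h2' c ‹_›
  constructor
  · -- case 0 < x
    intro hx
    set M := (x + 1).toNat with hM
    have hMx : (M : ℤ) = x + 1 := Int.toNat_of_nonneg (by omega)
    have hA : skellamCDF l1 l2 x = ∑' p : ℕ × ℕ,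
        (if ((p.1 : ℤ) - p.2) ≤ x then poissonPMF l1 p.1 * poissonPMF l2 p.2 else 0) :=
      hmaster (fun y => y ≤ x) inferInstance
    have hB : (∑' p : ℕ × ℕ,
        (if ¬ ((p.1 : ℤ) - p.2) ≤ x then poissonPMF l1 p.1 * poissonPMF l2 p.2 else 0))
        = ncChiSqCDFEven M (2 * l2) (2 * l1) := by
      have hswap := (Equiv.prodComm ℕ ℕ).tsum_eq
        (fun p : ℕ × ℕ => if ¬ ((p.1 : ℤ) - p.2) ≤ x
          then poissonPMF l1 p.1 * poissonPMF l2 p.2 else 0)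
      rw [← hswap]
      have hs : Summable (fun p : ℕ × ℕ => if ¬ ((p.2 : ℤ) - p.1) ≤ x
          then poissonPMF l1 p.2 * poissonPMF l2 p.1 else 0) := by
        rw [← (Equiv.prodComm ℕ ℕ).summable_iff]
        exact summable_F h1' h2' (fun y => ¬ y ≤ x)
      have : (fun p : ℕ × ℕ => (if ¬ ((p.2 : ℤ) - p.1) ≤ x
          then poissonPMF l1 p.2 * poissonPMF l2 p.1 else 0)) =
          fun p : ℕ × ℕ =>
            (if ¬ (((Equiv.prodComm ℕ ℕ) p).1 : ℤ) - ((Equiv.prodComm ℕ ℕ) p).2 ≤ x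
            then poissonPMF l1 ((Equiv.prodComm ℕ ℕ) p).1
              * poissonPMF l2 ((Equiv.prodComm ℕ ℕ) p).2 else 0) := rfl
      rw [show (fun p : ℕ × ℕ =>
          (if ¬ (((Equiv.prodComm ℕ ℕ) p).1 : ℤ) - ((Equiv.prodComm ℕ ℕ) p).2 ≤ x
            then poissonPMF l1 ((Equiv.prodComm ℕ ℕ) p).1
              * poissonPMF l2 ((Equiv.prodComm ℕ ℕ) p).2 else 0)) =
          (fun p : ℕ × ℕ => if ¬ ((p.2 : ℤ) - p.1) ≤ x
            then poissonPMF l1 p.2 * poissonPMF l2 p.1 else 0) from rfl]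
      rw [Summable.tsum_prod' hs (fun k => hs.prod_factor k)]
      unfold ncChiSqCDFEven
      rw [show 2 * l2 / 2 = l2 by ring, show 2 * l1 / 2 = l1 by ring]
      apply tsum_congr
      intro k
      have hpt : ∀ n : ℕ, (if ¬ ((n : ℤ) - k) ≤ x
          then poissonPMF l1 n * poissonPMF l2 k else 0)
          = poissonPMF l2 k * (if M + k ≤ n then poissonPMF l1 n else 0) := by
        intro n
        by_cases hn : M + k ≤ n
        · rw [if_pos (by omega), if_pos hn, mul_comm]
        · rw [if_neg (by omega), if_neg hn, mul_zero]
      simp_rw [hpt]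
      rw [tsum_mul_left]
      rfl
    have htot : (∑' p : ℕ × ℕ,
          (if ((p.1 : ℤ) - p.2) ≤ x then poissonPMF l1 p.1 * poissonPMF l2 p.2 else 0))
        + (∑' p : ℕ × ℕ,
          (if ¬ ((p.1 : ℤ) - p.2) ≤ x then poissonPMF l1 p.1 * poissonPMF l2 p.2 else 0))
        = 1 := by
      rw [← Summable.tsum_add (summable_F h1' h2' (fun y => y ≤ x))
        (summable_F h1' h2' (fun y => ¬ y ≤ x))]
      have hone : ∀ p : ℕ × ℕ,
          (if ((p.1 : ℤ) - p.2) ≤ x then poissonPMF l1 p.1 * poissonPMF l2 p.2 else 0)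
          + (if ¬ ((p.1 : ℤ) - p.2) ≤ x then poissonPMF l1 p.1 * poissonPMF l2 p.2 else 0)
          = poissonPMF l1 p.1 * poissonPMF l2 p.2 := by
        intro p; split_ifs <;> simp
      simp_rw [hone]
      rw [Summable.tsum_prod' (summable_prodPMF l1 l2) (fun n => (summable_prodPMF l1 l2).prod_factor n)]
      simp_rw [tsum_mul_left, tsum_poissonPMF l2, mul_one, tsum_poissonPMF l1]
    rw [hA, ← hB]
    linarith
  · -- case x ≤ 0
    intro hx
    set m := (-x).toNat with hm
    have hmx : (m : ℤ) = -x := Int.toNat_of_nonneg (by omega)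
    have hA : skellamCDF l1 l2 x = ∑' p : ℕ × ℕ,
        (if ((p.1 : ℤ) - p.2) ≤ x then poissonPMF l1 p.1 * poissonPMF l2 p.2 else 0) :=
      hmaster (fun y => y ≤ x) inferInstance
    rw [hA]
    have hs := summable_F (l1 := l1) (l2 := l2) h1' h2' (fun y => y ≤ x)
    rw [Summable.tsum_prod' hs (fun n => hs.prod_factor n)]
    unfold ncChiSqCDFEven
    rw [show 2 * l1 / 2 = l1 by ring, show 2 * l2 / 2 = l2 by ring]
    apply tsum_congr
    intro n
    have hpt : ∀ k : ℕ, (if ((n : ℤ) - k) ≤ x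
        then poissonPMF l1 n * poissonPMF l2 k else 0)
        = poissonPMF l1 n * (if m + n ≤ k then poissonPMF l2 k else 0) := by
      intro k
      by_cases hk : m + n ≤ k
      · rw [if_pos (by omega), if_pos hk]
      · rw [if_neg (by omega), if_neg hk, mul_zero]
    simp_rw [hpt]
    rw [tsum_mul_left]
    rfl
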